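/- (Weak duality.) Let c ≥ 0. Let u : ℝ² → ℝ be Lipschitz with u ≥ 0 on [c,c+1]² and partial derivatives ≤ 1 almost everywhere on [c,c+1]². Let z₁, z₂ : ℝ² → ℝ be Lipschitz with z₁, z₂ ≥ 0 on [c,c+1]², satisfying ∂z₁/∂x₁(x) + ∂z₂/∂x₂(x) ≤ 3 for almost every x ∈ [c,c+1]², and the boundary conditions z₁(c,x₂) ≤ c, z₁(c+1,x₂) ≥ c+1 for all x₂ ∈ [c,c+1] and z₂(x₁,c) ≤ c, z₂(x₁,c+1) ≥ c+1 for all x₁ ∈ [c,c+1]. Then Rev_c(u) ≤ ∫_{[c,c+1]²} (z₁(x) + z₂(x)) dx. -/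

import Mathlib

open MeasureTheory Real Set

/-- Partial derivative of `u` with respect to the first coordinate
(defined via `deriv`; for Lipschitz `u` it exists a.e. by Rademacher). -/
noncomputable def pd1 (u : ℝ × ℝ → ℝ) (x : ℝ × ℝ) : ℝ := deriv (fun t => u (t, x.2)) x.1

/-- Partial derivative of `u` with respect to the second coordinate. -/
noncomputable def pd2 (u : ℝ × ℝ → ℝ) (x : ℝ × ℝ) : ℝ := deriv (fun t => u (x.1, t)) x.2

/-- The square `[c, c+1]²`. -/
def box (c : ℝ) : Set (ℝ × ℝ) := Icc c (c + 1) ×ˢ Icc c (c + 1)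

/-- The revenue of the (relaxed) mechanism induced by utility `u`:
`∫_{[c,c+1]²} (x₁ ∂u/∂x₁ + x₂ ∂u/∂x₂ − u)`. -/
noncomputable def Rev (c : ℝ) (u : ℝ × ℝ → ℝ) : ℝ :=
  ∫ x in box c, (x.1 * pd1 u x + x.2 * pd2 u x - u x)

/-- `Opt(c)`, the optimal value of the convexity-relaxed program for `0 ≤ c ≤ c̄`. -/
noncomputable def Opt (c : ℝ) : ℝ :=
  2 / 27 * ((Real.sqrt 2 - 4) * c ^ 3
    + 3 * (Real.sqrt (c * (3 * c + 2)) + Real.sqrt 2 + 1) * c ^ 2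
    + (2 * Real.sqrt (c * (3 * c + 2)) + 3 * Real.sqrt 2 + 12) * c
    + Real.sqrt 2 + 6)

/-- `BRev(c)`, the best full-bundling revenue. -/
noncomputable def BRev (c : ℝ) : ℝ :=
  2 / 27 * (-4 * c ^ 3 + Real.sqrt 2 * Real.sqrt ((2 * c ^ 2 + 3) ^ 3) + 18 * c)

/-- The critical constant `c̄ = √(15 − 8√2) − 2√2 + 1 ≈ 0.0915`. -/
noncomputable def cbar : ℝ := Real.sqrt (15 - 8 * Real.sqrt 2) - 2 * Real.sqrt 2 + 1


section WeakDualityHelpers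
open Filter Topology

lemma lip_add_mono {g : ℝ → ℝ} {K : NNReal} (hg : LipschitzWith K g) :
    Monotone fun x => g x + K * x := by
  intro x y hxy
  have h := hg.dist_le_mul x y
  rw [Real.dist_eq, Real.dist_eq, abs_sub_comm x y, abs_of_nonneg (by linarith : (0:ℝ) ≤ y - x)]
    at h
  simp only
  have := le_abs_self (g x - g y)
  linarith

lemma lipschitz_integral_deriv {g : ℝ → ℝ} {K : NNReal} (hg : LipschitzWith K g) {a b : ℝ}
    (hab : a ≤ b) : ∫ x in Set.Ioc a b, deriv g x = g b - g a := by
  set f1 : ℝ → ℝ := fun x => g x + K * x with hf1def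
  set f2 : ℝ → ℝ := fun x => -g x + K * x with hf2def
  have mono1 : Monotone f1 := lip_add_mono hg
  have mono2 : Monotone f2 := lip_add_mono hg.neg
  have cont1 : Continuous f1 := hg.continuous.add (continuous_const.mul continuous_id)
  have cont2 : Continuous f2 := hg.continuous.neg.add (continuous_const.mul continuous_id)
  set s1 := mono1.stieltjesFunction with hs1def
  set s2 := mono2.stieltjesFunction with hs2def
  have s1eq : ∀ x, s1 x = f1 x := by
    intro x
    rw [hs1def, Monotone.stieltjesFunction_eq]
    exact rightLim_eq_of_tendsto
      ((cont1.tendsto x).mono_left nhdsWithin_le_nhds)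
  have s2eq : ∀ x, s2 x = f2 x := by
    intro x
    rw [hs2def, Monotone.stieltjesFunction_eq]
    exact rightLim_eq_of_tendsto
      ((cont2.tendsto x).mono_left nhdsWithin_le_nhds)
  -- the sum of the two Stieltjes measures is 2K * volume
  have key : s1.measure + s2.measure = (ENNReal.ofReal (2 * K)) • volume := by
    refine MeasureTheory.Measure.ext_of_Ioc' _ _ (fun p q hpq => ?_) (fun p q hpq => ?_)
    · rw [Measure.add_apply, s1.measure_Ioc, s2.measure_Ioc]
      exact ENNReal.add_ne_top.2 ⟨ENNReal.ofReal_ne_top, ENNReal.ofReal_ne_top⟩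
    · have hm1 : (0:ℝ) ≤ f1 q - f1 p := sub_nonneg.2 (mono1 hpq.le)
      have hm2 : (0:ℝ) ≤ f2 q - f2 p := sub_nonneg.2 (mono2 hpq.le)
      rw [Measure.add_apply, s1.measure_Ioc, s2.measure_Ioc, s1eq, s1eq, s2eq, s2eq,
        Measure.smul_apply, Real.volume_Ioc, smul_eq_mul, ← ENNReal.ofReal_mul (by positivity),
        ← ENNReal.ofReal_add hm1 hm2]
      congr 1
      simp only [hf1def, hf2def]
      ring
  have habs : s1.measure ≪ volume := by
    intro s hs
    have h1 : s1.measure s ≤ (s1.measure + s2.measure) s := by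
      rw [Measure.add_apply]; exact le_self_add
    rw [key, Measure.smul_apply, hs, smul_eq_mul, mul_zero] at h1
    exact le_antisymm h1 zero_le
  have hLD : volume.withDensity (s1.measure.rnDeriv volume) = s1.measure :=
    Measure.withDensity_rnDeriv_eq _ _ habs
  have hlintIoc : ∫⁻ x in Set.Ioc a b, s1.measure.rnDeriv volume x = s1.measure (Set.Ioc a b) := by
    rw [← hLD, withDensity_apply _ measurableSet_Ioc]
    rw [hLD]
  have hmeasIoc : s1.measure (Set.Ioc a b) = ENNReal.ofReal (f1 b - f1 a) := by
    rw [s1.measure_Ioc, s1eq, s1eq]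
  have hrnmeas : Measurable (s1.measure.rnDeriv volume) := Measure.measurable_rnDeriv s1.measure volume
  have hrnlt : ∀ᵐ x ∂(volume.restrict (Set.Ioc a b)), s1.measure.rnDeriv volume x < ⊤ :=
    ae_restrict_of_ae (Measure.rnDeriv_lt_top _ _)
  have hint1 : ∫ x in Set.Ioc a b, (s1.measure.rnDeriv volume x).toReal = f1 b - f1 a := by
    rw [integral_toReal hrnmeas.aemeasurable.restrict hrnlt, hlintIoc, hmeasIoc,
      ENNReal.toReal_ofReal (sub_nonneg.2 (mono1 hab))]
  have hintgr1 : IntegrableOn (fun x => (s1.measure.rnDeriv volume x).toReal) (Set.Ioc a b) := by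
    refine integrable_toReal_of_lintegral_ne_top hrnmeas.aemeasurable.restrict ?_
    rw [hlintIoc, hmeasIoc]; exact ENNReal.ofReal_ne_top
  have hderg : ∀ᵐ x ∂(volume : Measure ℝ),
      deriv g x = (s1.measure.rnDeriv volume x).toReal - K := by
    filter_upwards [s1.ae_hasDerivAt] with x hx
    have hx' : HasDerivAt f1 ((s1.measure.rnDeriv volume x).toReal) x := by
      have : (s1 : ℝ → ℝ) = f1 := funext s1eq
      rwa [this] at hx
    have hg' : HasDerivAt g ((s1.measure.rnDeriv volume x).toReal - K) x := by
      have h2 : HasDerivAt (fun y => f1 y - K * y)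
          ((s1.measure.rnDeriv volume x).toReal - K) x := by
        have h3 := hx'.sub ((hasDerivAt_id x).const_mul (K : ℝ))
        simp only [mul_one] at h3
        exact h3
      have : (fun y => f1 y - K * y) = g := by funext y; simp [hf1def]
      rwa [this] at h2
    exact hg'.deriv
  calc ∫ x in Set.Ioc a b, deriv g x
      = ∫ x in Set.Ioc a b, ((s1.measure.rnDeriv volume x).toReal - K) :=
        integral_congr_ae (ae_restrict_of_ae hderg)
    _ = (∫ x in Set.Ioc a b, (s1.measure.rnDeriv volume x).toReal)
        - ∫ _x in Set.Ioc a b, (K : ℝ) := by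
        exact integral_sub hintgr1 (integrableOn_const (by simp [Real.volume_Ioc]))
    _ = g b - g a := by
        rw [hint1, setIntegral_const, Real.volume_real_Ioc, smul_eq_mul,
          max_eq_left (by linarith)]
        simp only [hf1def]
        ring

lemma lip_mul_of_bounded {f h : ℝ → ℝ} {Kf Kh : NNReal} {A B : ℝ}
    (hf : LipschitzWith Kf f) (hh : LipschitzWith Kh h)
    (hA : ∀ x, |f x| ≤ A) (hB : ∀ x, |h x| ≤ B) :
    ∃ K : NNReal, LipschitzWith K (fun x => f x * h x) := by
  have hA0 : 0 ≤ A := le_trans (abs_nonneg _) (hA 0)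
  have hB0 : 0 ≤ B := le_trans (abs_nonneg _) (hB 0)
  refine ⟨⟨A, hA0⟩ * Kh + ⟨B, hB0⟩ * Kf, LipschitzWith.of_dist_le_mul fun x y => ?_⟩
  rw [Real.dist_eq, Real.dist_eq]
  have h1 : |h x - h y| ≤ Kh * |x - y| := by
    have := hh.dist_le_mul x y; rwa [Real.dist_eq, Real.dist_eq] at this
  have h2 : |f x - f y| ≤ Kf * |x - y| := by
    have := hf.dist_le_mul x y; rwa [Real.dist_eq, Real.dist_eq] at this
  have key : |f x * h x - f y * h y| ≤ A * (Kh * |x - y|) + B * (Kf * |x - y|) := by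
    calc |f x * h x - f y * h y| = |f x * (h x - h y) + h y * (f x - f y)| := by ring_nf
      _ ≤ |f x * (h x - h y)| + |h y * (f x - f y)| := abs_add_le _ _
      _ = |f x| * |h x - h y| + |h y| * |f x - f y| := by rw [abs_mul, abs_mul]
      _ ≤ A * (Kh * |x - y|) + B * (Kf * |x - y|) := by
          have := mul_le_mul (hA x) h1 (abs_nonneg _) hA0
          have := mul_le_mul (hB y) h2 (abs_nonneg _) hB0
          linarith
  refine key.trans (le_of_eq ?_)
  show A * (Kh * |x - y|) + B * (Kf * |x - y|) = ((A * Kh + B * Kf : ℝ)) * |x - y|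
  ring

lemma bdd_integrableOn {α : Type*} [MeasurableSpace α] {μ : Measure α} {f : α → ℝ} {s : Set α}
    (hs : μ s < ⊤) (hm : AEStronglyMeasurable f (μ.restrict s)) {C : ℝ}
    (hC : ∀ᵐ x ∂(μ.restrict s), |f x| ≤ C) : IntegrableOn f s μ := by
  exact Integrable.mono' (integrableOn_const hs.ne) hm
    (by simpa [Real.norm_eq_abs] using hC)

lemma abs_deriv_le_of_lip {g : ℝ → ℝ} {K : NNReal} (h : LipschitzWith K g) (x : ℝ) :
    |deriv g x| ≤ K := by
  simpa [Real.norm_eq_abs] using norm_deriv_le_of_lipschitz (𝕜 := ℝ) h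

lemma abs_mul_le' {a b A B : ℝ} (ha : |a| ≤ A) (hb : |b| ≤ B) : |a * b| ≤ A * B := by
  rw [abs_mul]; exact mul_le_mul ha hb (abs_nonneg _) ((abs_nonneg a).trans ha)

lemma lip_bound_on_Icc {g : ℝ → ℝ} {K : NNReal} (hg : LipschitzWith K g) {c : ℝ} :
    ∀ x ∈ Set.Icc c (c+1), |g x| ≤ |g c| + K := by
  intro x hx
  have h := hg.dist_le_mul x c
  rw [Real.dist_eq, Real.dist_eq] at h
  have hx1 : |x - c| ≤ 1 := by
    rw [abs_of_nonneg (by linarith [hx.1])]; linarith [hx.2]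
  have h2 : |g x - g c| ≤ (K:ℝ) := by
    refine h.trans ?_
    calc (K:ℝ) * |x - c| ≤ (K:ℝ) * 1 := by
          exact mul_le_mul_of_nonneg_left hx1 K.coe_nonneg
      _ = K := mul_one _
  calc |g x| = |g c + (g x - g c)| := by ring_nf
    _ ≤ |g c| + |g x - g c| := abs_add_le _ _
    _ ≤ |g c| + K := by linarith

lemma key1D {c : ℝ} {g w : ℝ → ℝ} {Kg Kw : NNReal}
    (hg : LipschitzWith Kg g) (hw : LipschitzWith Kw w)
    (hg0 : ∀ x ∈ Set.Icc c (c+1), 0 ≤ g x) (hw0 : ∀ x ∈ Set.Icc c (c+1), 0 ≤ w x)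
    (hg1 : ∀ᵐ x ∂(volume.restrict (Set.Icc c (c+1))), deriv g x ≤ 1)
    (hwlo : w c ≤ c) (hwhi : c + 1 ≤ w (c+1)) :
    ∫ x in Set.Icc c (c+1), x * deriv g x
      ≤ ∫ x in Set.Icc c (c+1), (deriv w x * g x + w x - g x) := by
  have hc1 : c ≤ c + 1 := by linarith
  set cl : ℝ → ℝ := fun x => min (max c x) (c+1) with hcldef
  have hclLip : LipschitzWith 1 cl := (LipschitzWith.id.const_max c).min_const (c+1)
  have hclmem : ∀ x, cl x ∈ Set.Icc c (c+1) :=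
    fun x => ⟨le_min (le_max_left c x) hc1, min_le_right _ _⟩
  have hcleq : ∀ x ∈ Set.Icc c (c+1), cl x = x := by
    intro x hx; rw [hcldef]; simp only; rw [max_eq_right hx.1, min_eq_left hx.2]
  set G : ℝ → ℝ := fun x => g (cl x) with hGdef
  set W : ℝ → ℝ := fun x => w (cl x) with hWdef
  have hGlip : LipschitzWith Kg G := by have := hg.comp hclLip; rw [mul_one] at this; exact this
  have hWlip : LipschitzWith Kw W := by have := hw.comp hclLip; rw [mul_one] at this; exact this
  set Mg : ℝ := |g c| + Kg with hMgdef
  set Mw : ℝ := |w c| + Kw with hMwdef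
  set Mx : ℝ := |c| + 1 with hMxdef
  have hMg0 : 0 ≤ Mg := by positivity
  have hMw0 : 0 ≤ Mw := by positivity
  have hbg : ∀ x ∈ Set.Icc c (c+1), |g x| ≤ Mg := lip_bound_on_Icc hg
  have hbw : ∀ x ∈ Set.Icc c (c+1), |w x| ≤ Mw := lip_bound_on_Icc hw
  have hbx : ∀ x ∈ Set.Icc c (c+1), |x| ≤ Mx := by
    intro x hx
    calc |x| = |c + (x - c)| := by ring_nf
      _ ≤ |c| + |x - c| := abs_add_le _ _
      _ ≤ |c| + 1 := by
          have : |x - c| ≤ 1 := by rw [abs_of_nonneg (by linarith [hx.1])]; linarith [hx.2]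
          linarith
  have hGbd : ∀ x, |G x| ≤ Mg := fun x => hbg (cl x) (hclmem x)
  have hfbd : ∀ x, |W x - cl x| ≤ Mw + Mx := by
    intro x
    have h1 := hbw (cl x) (hclmem x)
    have h2 := hbx (cl x) (hclmem x)
    have := abs_le.1 h1; have := abs_le.1 h2
    exact abs_le.2 ⟨by simp only [hWdef]; linarith [(abs_le.1 h1).1, (abs_le.1 h2).2],
      by simp only [hWdef]; linarith [(abs_le.1 h1).2, (abs_le.1 h2).1]⟩
  have hfLip : LipschitzWith (Kw + 1) (fun x => W x - cl x) := hWlip.sub hclLip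
  obtain ⟨Kφ, hφLip⟩ := lip_mul_of_bounded hfLip hGlip hfbd hGbd
  set φ : ℝ → ℝ := fun x => (W x - cl x) * G x with hφdef
  have hFTC : ∫ x in Set.Ioc c (c+1), deriv φ x = φ (c+1) - φ c :=
    lipschitz_integral_deriv hφLip hc1
  have hcl_lo : cl c = c := hcleq c ⟨le_refl c, hc1⟩
  have hcl_hi : cl (c+1) = c + 1 := hcleq (c+1) ⟨hc1, le_refl _⟩
  have hend : 0 ≤ φ (c+1) - φ c := by
    have e1 : φ (c+1) = (w (c+1) - (c+1)) * g (c+1) := by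
      simp only [hφdef, hWdef, hGdef, hcl_hi]
    have e2 : φ c = (w c - c) * g c := by
      simp only [hφdef, hWdef, hGdef, hcl_lo]
    have h1 : 0 ≤ (w (c+1) - (c+1)) * g (c+1) :=
      mul_nonneg (by linarith) (hg0 _ ⟨hc1, le_refl _⟩)
    have h2 : 0 ≤ (c - w c) * g c := mul_nonneg (by linarith) (hg0 c ⟨le_refl c, hc1⟩)
    have e3 : (w c - c) * g c = -((c - w c) * g c) := by ring
    rw [e1, e2, e3]; linarith
  set P : ℝ → ℝ := fun x => (deriv w x - 1) * g x + (w x - x) * deriv g x with hPdef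
  set Q : ℝ → ℝ := fun x => w x * (1 - deriv g x) with hQdef
  have hae : ∀ᵐ x ∂(volume.restrict (Set.Ioo c (c+1))), deriv φ x = P x := by
    filter_upwards [ae_restrict_of_ae (hg.ae_differentiableAt.and hw.ae_differentiableAt),
      ae_restrict_mem measurableSet_Ioo] with x hd hx
    have hnb : Set.Ioo c (c+1) ∈ nhds x := Ioo_mem_nhds hx.1 hx.2
    have heq : φ =ᶠ[nhds x] fun y => (w y - y) * g y := by
      filter_upwards [hnb] with y hy
      simp only [hφdef, hWdef, hGdef, hcleq y (Set.Ioo_subset_Icc_self hy)]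
    have hD : HasDerivAt (fun y => (w y - y) * g y)
        ((deriv w x - 1) * g x + (w x - x) * deriv g x) x :=
      ((hd.2.hasDerivAt.sub (hasDerivAt_id x)).mul hd.1.hasDerivAt)
    rw [heq.deriv_eq]
    exact hD.deriv
  have hIoofin : volume (Set.Ioo c (c+1)) < ⊤ := by simp [Real.volume_Ioo]
  have hmg : Measurable (deriv g) := measurable_deriv g
  have hmw : Measurable (deriv w) := measurable_deriv w
  have hPint : IntegrableOn P (Set.Ioo c (c+1)) := by
    refine bdd_integrableOn hIoofin
      ((((hmw.sub measurable_const).mul hg.continuous.measurable).add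
        ((hw.continuous.measurable.sub measurable_id).mul hmg)).aestronglyMeasurable)
      (C := ((Kw:ℝ) + 1) * Mg + (Mw + Mx) * (Kg:ℝ)) ?_
    filter_upwards [ae_restrict_mem measurableSet_Ioo] with x hx
    have hx' : x ∈ Set.Icc c (c+1) := Set.Ioo_subset_Icc_self hx
    have e1 : |deriv w x - 1| ≤ (Kw:ℝ) + 1 := by
      have := abs_le.1 (abs_deriv_le_of_lip hw x)
      exact abs_le.2 ⟨by linarith, by linarith⟩
    have e2 : |w x - x| ≤ Mw + Mx := by
      have := abs_le.1 (hbw x hx'); have := abs_le.1 (hbx x hx')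
      exact abs_le.2 ⟨by linarith [(abs_le.1 (hbw x hx')).1, (abs_le.1 (hbx x hx')).2],
        by linarith [(abs_le.1 (hbw x hx')).2, (abs_le.1 (hbx x hx')).1]⟩
    calc |P x| ≤ |(deriv w x - 1) * g x| + |(w x - x) * deriv g x| := abs_add_le _ _
      _ ≤ ((Kw:ℝ) + 1) * Mg + (Mw + Mx) * (Kg:ℝ) := by
          have := abs_mul_le' e1 (hbg x hx')
          have := abs_mul_le' e2 (abs_deriv_le_of_lip hg x)
          linarith
  have hQint : IntegrableOn Q (Set.Ioo c (c+1)) := by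
    refine bdd_integrableOn hIoofin
      ((hw.continuous.measurable.mul (measurable_const.sub hmg)).aestronglyMeasurable)
      (C := Mw * (1 + (Kg:ℝ))) ?_
    filter_upwards [ae_restrict_mem measurableSet_Ioo] with x hx
    have hx' : x ∈ Set.Icc c (c+1) := Set.Ioo_subset_Icc_self hx
    have e1 : |1 - deriv g x| ≤ 1 + (Kg:ℝ) := by
      have := abs_le.1 (abs_deriv_le_of_lip hg x)
      exact abs_le.2 ⟨by linarith, by linarith⟩
    exact abs_mul_le' (hbw x hx') e1
  have hLint : IntegrableOn (fun x => x * deriv g x) (Set.Ioo c (c+1)) := by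
    refine bdd_integrableOn hIoofin ((measurable_id.mul hmg).aestronglyMeasurable)
      (C := Mx * (Kg:ℝ)) ?_
    filter_upwards [ae_restrict_mem measurableSet_Ioo] with x hx
    exact abs_mul_le' (hbx x (Set.Ioo_subset_Icc_self hx)) (abs_deriv_le_of_lip hg x)
  have hRint : IntegrableOn (fun x => deriv w x * g x + w x - g x) (Set.Ioo c (c+1)) := by
    refine bdd_integrableOn hIoofin
      (((hmw.mul hg.continuous.measurable).add hw.continuous.measurable |>.sub
        hg.continuous.measurable).aestronglyMeasurable)
      (C := (Kw:ℝ) * Mg + Mw + Mg) ?_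
    filter_upwards [ae_restrict_mem measurableSet_Ioo] with x hx
    have hx' : x ∈ Set.Icc c (c+1) := Set.Ioo_subset_Icc_self hx
    have e1 := abs_mul_le' (abs_deriv_le_of_lip hw x) (hbg x hx')
    have e2 := abs_le.1 (hbw x hx')
    have e3 := abs_le.1 (hbg x hx')
    have e4 := abs_le.1 e1
    exact abs_le.2 ⟨by linarith, by linarith⟩
  have h0 : 0 ≤ ∫ x in Set.Ioo c (c+1), P x := by
    have h1 := hFTC
    rw [integral_Ioc_eq_integral_Ioo, integral_congr_ae hae] at h1
    linarith [hend, h1.ge, h1.le]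
  have hQ0 : 0 ≤ ∫ x in Set.Ioo c (c+1), Q x := by
    refine integral_nonneg_of_ae ?_
    filter_upwards [ae_restrict_mem measurableSet_Ioo,
      ae_restrict_of_ae_restrict_of_subset Set.Ioo_subset_Icc_self hg1] with x hx hgx
    exact mul_nonneg (hw0 x (Set.Ioo_subset_Icc_self hx)) (by linarith)
  rw [integral_Icc_eq_integral_Ioc, integral_Icc_eq_integral_Ioc,
    integral_Ioc_eq_integral_Ioo, integral_Ioc_eq_integral_Ioo]
  have hsplit : (∫ x in Set.Ioo c (c+1), (deriv w x * g x + w x - g x))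
      - ∫ x in Set.Ioo c (c+1), x * deriv g x
      = (∫ x in Set.Ioo c (c+1), P x) + ∫ x in Set.Ioo c (c+1), Q x := by
    rw [← integral_sub hRint hLint, ← integral_add hPint hQint]
    refine integral_congr_ae (Filter.Eventually.of_forall fun x => ?_)
    simp only [hPdef, hQdef]; ring
  linarith

end WeakDualityHelpers

/-- weak duality: For `c ≥ 0`, any feasible primal `u` and any
feasible dual `(z₁, z₂)` satisfy `Rev_c(u) ≤ ∫_{[c,c+1]²} (z₁ + z₂)`. -/
theorem weak_duality (c : ℝ) (hc : 0 ≤ c)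
    (u : ℝ × ℝ → ℝ) (huLip : ∃ K : NNReal, LipschitzWith K u)
    (hunn : ∀ x ∈ box c, 0 ≤ u x)
    (huder : ∀ᵐ x ∂(volume.restrict (box c)), pd1 u x ≤ 1 ∧ pd2 u x ≤ 1)
    (z₁ z₂ : ℝ × ℝ → ℝ)
    (hz₁Lip : ∃ K : NNReal, LipschitzWith K z₁)
    (hz₂Lip : ∃ K : NNReal, LipschitzWith K z₂)
    (hz₁nn : ∀ x ∈ box c, 0 ≤ z₁ x) (hz₂nn : ∀ x ∈ box c, 0 ≤ z₂ x)
    (hzder : ∀ᵐ x ∂(volume.restrict (box c)), pd1 z₁ x + pd2 z₂ x ≤ 3)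
    (hz₁lo : ∀ x₂ ∈ Icc c (c + 1), z₁ (c, x₂) ≤ c)
    (hz₁hi : ∀ x₂ ∈ Icc c (c + 1), c + 1 ≤ z₁ (c + 1, x₂))
    (hz₂lo : ∀ x₁ ∈ Icc c (c + 1), z₂ (x₁, c) ≤ c)
    (hz₂hi : ∀ x₁ ∈ Icc c (c + 1), c + 1 ≤ z₂ (x₁, c + 1)) :
    Rev c u ≤ ∫ x in box c, (z₁ x + z₂ x) := by
  obtain ⟨Ku, huL⟩ := huLip
  obtain ⟨K1, h1L⟩ := hz₁Lip
  obtain ⟨K2, h2L⟩ := hz₂Lip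
  have hc1 : c ≤ c + 1 := by linarith
  have hboxm : MeasurableSet (box c) := measurableSet_Icc.prod measurableSet_Icc
  have hboxfin : volume (box c) < ⊤ := (isCompact_Icc.prod isCompact_Icc).measure_lt_top
  set I : Set ℝ := Set.Icc c (c+1) with hIdef
  have hprodmeas : volume.restrict (box c)
      = ((volume : Measure ℝ).restrict I).prod ((volume : Measure ℝ).restrict I) := by
    rw [Measure.prod_restrict, ← Measure.volume_eq_prod]
    rfl
  -- measurability of partial derivatives
  have hmpd1 : ∀ (v : ℝ × ℝ → ℝ), Continuous v → Measurable (pd1 v) := by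
    intro v hv
    have hcont : Continuous (Function.uncurry (fun a t : ℝ => v (t, a))) :=
      hv.comp continuous_swap
    exact (measurable_deriv_with_param hcont).comp measurable_swap
  have hmpd2 : ∀ (v : ℝ × ℝ → ℝ), Continuous v → Measurable (pd2 v) := by
    intro v hv
    have hcont : Continuous (Function.uncurry (fun a t : ℝ => v (a, t))) := hv
    exact measurable_deriv_with_param hcont
  have hmpd1u := hmpd1 u huL.continuous
  have hmpd2u := hmpd2 u huL.continuous
  have hmpd1z := hmpd1 z₁ h1L.continuous
  have hmpd2z := hmpd2 z₂ h2L.continuous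
  -- slice Lipschitz
  have hsl1 : ∀ (v : ℝ × ℝ → ℝ) (K : NNReal), LipschitzWith K v →
      ∀ y, LipschitzWith K (fun t => v (t, y)) := by
    intro v K hK y
    simpa [Function.comp_def] using hK.comp (LipschitzWith.prodMk_right y)
  have hsl2 : ∀ (v : ℝ × ℝ → ℝ) (K : NNReal), LipschitzWith K v →
      ∀ a, LipschitzWith K (fun t => v (a, t)) := by
    intro v K hK a
    simpa [Function.comp_def] using hK.comp (LipschitzWith.prodMk_left a)
  -- bounds for partial derivatives
  have hbpd1 : ∀ (v : ℝ × ℝ → ℝ) (K : NNReal), LipschitzWith K v →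
      ∀ x, |pd1 v x| ≤ K := by
    intro v K hK x
    exact abs_deriv_le_of_lip (hsl1 v K hK x.2) x.1
  have hbpd2 : ∀ (v : ℝ × ℝ → ℝ) (K : NNReal), LipschitzWith K v →
      ∀ x, |pd2 v x| ≤ K := by
    intro v K hK x
    exact abs_deriv_le_of_lip (hsl2 v K hK x.1) x.2
  -- bounds for functions on the box
  have hbfun : ∀ (v : ℝ × ℝ → ℝ) (K : NNReal), LipschitzWith K v →
      ∀ x ∈ box c, |v x| ≤ |v (c,c)| + K := by
    intro v K hK x hx
    have hd : dist x ((c,c) : ℝ × ℝ) ≤ 1 := by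
      rw [Prod.dist_eq]
      have hx1 : x.1 ∈ I := hx.1
      have hx2 : x.2 ∈ I := hx.2
      refine max_le ?_ ?_ <;> rw [Real.dist_eq]
      · rw [abs_of_nonneg (by linarith [hx1.1])]; linarith [hx1.2]
      · rw [abs_of_nonneg (by linarith [hx2.1])]; linarith [hx2.2]
    have h := (hK.dist_le_mul x (c,c)).trans
      (mul_le_mul_of_nonneg_left hd K.coe_nonneg)
    rw [Real.dist_eq, mul_one] at h
    calc |v x| = |v (c,c) + (v x - v (c,c))| := by ring_nf
      _ ≤ |v (c,c)| + |v x - v (c,c)| := abs_add_le _ _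
      _ ≤ |v (c,c)| + K := by linarith
  set Mu : ℝ := |u (c,c)| + Ku with hMudef
  set M1 : ℝ := |z₁ (c,c)| + K1 with hM1def
  set M2 : ℝ := |z₂ (c,c)| + K2 with hM2def
  set MX : ℝ := |c| + 1 with hMXdef
  have hbX : ∀ t ∈ I, |t| ≤ MX := by
    intro t ht
    calc |t| = |c + (t - c)| := by ring_nf
      _ ≤ |c| + |t - c| := abs_add_le _ _
      _ ≤ |c| + 1 := by
          have : |t - c| ≤ 1 := by rw [abs_of_nonneg (by linarith [ht.1])]; linarith [ht.2]
          linarith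
  -- integrability on box
  have IntF1 : IntegrableOn (fun x : ℝ × ℝ => x.1 * pd1 u x) (box c) := by
    refine bdd_integrableOn hboxfin ((measurable_fst.mul hmpd1u).aestronglyMeasurable)
      (C := MX * Ku) ?_
    filter_upwards [ae_restrict_mem hboxm] with x hx
    exact abs_mul_le' (hbX x.1 hx.1) (hbpd1 u Ku huL x)
  have IntF2 : IntegrableOn (fun x : ℝ × ℝ => x.2 * pd2 u x) (box c) := by
    refine bdd_integrableOn hboxfin ((measurable_snd.mul hmpd2u).aestronglyMeasurable)
      (C := MX * Ku) ?_
    filter_upwards [ae_restrict_mem hboxm] with x hx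
    exact abs_mul_le' (hbX x.2 hx.2) (hbpd2 u Ku huL x)
  have Intu : IntegrableOn u (box c) := by
    refine bdd_integrableOn hboxfin (huL.continuous.measurable.aestronglyMeasurable)
      (C := Mu) ?_
    filter_upwards [ae_restrict_mem hboxm] with x hx
    exact hbfun u Ku huL x hx
  have Intz1 : IntegrableOn z₁ (box c) := by
    refine bdd_integrableOn hboxfin (h1L.continuous.measurable.aestronglyMeasurable)
      (C := M1) ?_
    filter_upwards [ae_restrict_mem hboxm] with x hx
    exact hbfun z₁ K1 h1L x hx
  have Intz2 : IntegrableOn z₂ (box c) := by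
    refine bdd_integrableOn hboxfin (h2L.continuous.measurable.aestronglyMeasurable)
      (C := M2) ?_
    filter_upwards [ae_restrict_mem hboxm] with x hx
    exact hbfun z₂ K2 h2L x hx
  have IntG1 : IntegrableOn (fun x : ℝ × ℝ => pd1 z₁ x * u x) (box c) := by
    refine bdd_integrableOn hboxfin
      ((hmpd1z.mul huL.continuous.measurable).aestronglyMeasurable) (C := (K1:ℝ) * Mu) ?_
    filter_upwards [ae_restrict_mem hboxm] with x hx
    exact abs_mul_le' (hbpd1 z₁ K1 h1L x) (hbfun u Ku huL x hx)
  have IntG2 : IntegrableOn (fun x : ℝ × ℝ => pd2 z₂ x * u x) (box c) := by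
    refine bdd_integrableOn hboxfin
      ((hmpd2z.mul huL.continuous.measurable).aestronglyMeasurable) (C := (K2:ℝ) * Mu) ?_
    filter_upwards [ae_restrict_mem hboxm] with x hx
    exact abs_mul_le' (hbpd2 z₂ K2 h2L x) (hbfun u Ku huL x hx)
  -- Step 1
  have S1 : (∫ x in box c, x.1 * pd1 u x)
      ≤ ∫ x in box c, (pd1 z₁ x * u x + z₁ x - u x) := by
    set F : ℝ × ℝ → ℝ := fun x => x.1 * pd1 u x with hFdef
    set R : ℝ × ℝ → ℝ := fun x => pd1 z₁ x * u x + z₁ x - u x with hRdef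
    have hIntF : Integrable F (((volume : Measure ℝ).restrict I).prod
        ((volume : Measure ℝ).restrict I)) := by rw [← hprodmeas]; exact IntF1
    have hIntR : Integrable R (((volume : Measure ℝ).restrict I).prod
        ((volume : Measure ℝ).restrict I)) := by
      rw [← hprodmeas]; exact (IntG1.add Intz1).sub Intu
    have h1 : ∀ᵐ p ∂(((volume : Measure ℝ).restrict I).prod
        ((volume : Measure ℝ).restrict I)), pd1 u p ≤ 1 := by
      rw [← hprodmeas]; exact huder.mono fun x h => h.1
    have h2 : ∀ᵐ q ∂(((volume : Measure ℝ).restrict I).prod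
        ((volume : Measure ℝ).restrict I)), pd1 u q.swap ≤ 1 := by
      refine ae_of_ae_map (f := (Prod.swap : ℝ × ℝ → ℝ × ℝ)) (p := fun r => pd1 u r ≤ 1) measurable_swap.aemeasurable ?_
      rwa [Measure.prod_swap]
    have h3 := MeasureTheory.Measure.ae_ae_of_ae_prod h2
    have hslice : ∀ᵐ y ∂((volume : Measure ℝ).restrict I),
        (∫ x, F (x, y) ∂((volume : Measure ℝ).restrict I))
          ≤ ∫ x, R (x, y) ∂((volume : Measure ℝ).restrict I) := by
      filter_upwards [h3, ae_restrict_mem measurableSet_Icc] with y h3y hy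
      have := key1D (c := c) (hsl1 u Ku huL y) (hsl1 z₁ K1 h1L y)
        (fun x hx => hunn (x, y) ⟨hx, hy⟩) (fun x hx => hz₁nn (x, y) ⟨hx, hy⟩)
        h3y (hz₁lo y hy) (hz₁hi y hy)
      exact this
    calc ∫ x in box c, F x
        = ∫ x, F x ∂(((volume : Measure ℝ).restrict I).prod ((volume : Measure ℝ).restrict I)) :=
            by rw [← hprodmeas]
      _ = ∫ y, (∫ x, F (x, y) ∂((volume : Measure ℝ).restrict I))
            ∂((volume : Measure ℝ).restrict I) := integral_prod_symm F hIntF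
      _ ≤ ∫ y, (∫ x, R (x, y) ∂((volume : Measure ℝ).restrict I))
            ∂((volume : Measure ℝ).restrict I) :=
          integral_mono_ae hIntF.integral_prod_right hIntR.integral_prod_right hslice
      _ = ∫ x, R x ∂(((volume : Measure ℝ).restrict I).prod ((volume : Measure ℝ).restrict I)) :=
            (integral_prod_symm R hIntR).symm
      _ = ∫ x in box c, R x := by rw [← hprodmeas]
  -- Step 2
  have S2 : (∫ x in box c, x.2 * pd2 u x)
      ≤ ∫ x in box c, (pd2 z₂ x * u x + z₂ x - u x) := by
    set F : ℝ × ℝ → ℝ := fun x => x.2 * pd2 u x with hFdef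
    set R : ℝ × ℝ → ℝ := fun x => pd2 z₂ x * u x + z₂ x - u x with hRdef
    have hIntF : Integrable F (((volume : Measure ℝ).restrict I).prod
        ((volume : Measure ℝ).restrict I)) := by rw [← hprodmeas]; exact IntF2
    have hIntR : Integrable R (((volume : Measure ℝ).restrict I).prod
        ((volume : Measure ℝ).restrict I)) := by
      rw [← hprodmeas]; exact (IntG2.add Intz2).sub Intu
    have h1 : ∀ᵐ p ∂(((volume : Measure ℝ).restrict I).prod
        ((volume : Measure ℝ).restrict I)), pd2 u p ≤ 1 := by
      rw [← hprodmeas]; exact huder.mono fun x h => h.2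
    have h3 := MeasureTheory.Measure.ae_ae_of_ae_prod h1
    have hslice : ∀ᵐ a ∂((volume : Measure ℝ).restrict I),
        (∫ t, F (a, t) ∂((volume : Measure ℝ).restrict I))
          ≤ ∫ t, R (a, t) ∂((volume : Measure ℝ).restrict I) := by
      filter_upwards [h3, ae_restrict_mem measurableSet_Icc] with a h3a ha
      have := key1D (c := c) (hsl2 u Ku huL a) (hsl2 z₂ K2 h2L a)
        (fun x hx => hunn (a, x) ⟨ha, hx⟩) (fun x hx => hz₂nn (a, x) ⟨ha, hx⟩)
        h3a (hz₂lo a ha) (hz₂hi a ha)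
      exact this
    calc ∫ x in box c, F x
        = ∫ x, F x ∂(((volume : Measure ℝ).restrict I).prod ((volume : Measure ℝ).restrict I)) :=
            by rw [← hprodmeas]
      _ = ∫ a, (∫ t, F (a, t) ∂((volume : Measure ℝ).restrict I))
            ∂((volume : Measure ℝ).restrict I) := integral_prod F hIntF
      _ ≤ ∫ a, (∫ t, R (a, t) ∂((volume : Measure ℝ).restrict I))
            ∂((volume : Measure ℝ).restrict I) :=
          integral_mono_ae hIntF.integral_prod_left hIntR.integral_prod_left hslice
      _ = ∫ x, R x ∂(((volume : Measure ℝ).restrict I).prod ((volume : Measure ℝ).restrict I)) :=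
            (integral_prod R hIntR).symm
      _ = ∫ x in box c, R x := by rw [← hprodmeas]
  -- final combination
  have hfin : (∫ x in box c, pd1 z₁ x * u x) + (∫ x in box c, pd2 z₂ x * u x)
      - 3 * ∫ x in box c, u x ≤ 0 := by
    have hae : (fun x => pd1 z₁ x * u x + pd2 z₂ x * u x - 3 * u x)
        ≤ᵐ[volume.restrict (box c)] 0 := by
      filter_upwards [hzder, ae_restrict_mem hboxm] with x h1 h2
      have h3 := hunn x h2
      have h4 := mul_nonneg (sub_nonneg.2 h1) h3
      simp only [Pi.zero_apply]
      nlinarith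
    have h5 := integral_nonpos_of_ae hae
    have hs1 : IntegrableOn (fun x : ℝ × ℝ => pd1 z₁ x * u x + pd2 z₂ x * u x) (box c) :=
      IntG1.add IntG2
    have hs2 : IntegrableOn (fun x : ℝ × ℝ => 3 * u x) (box c) := Intu.const_mul 3
    rw [integral_sub hs1 hs2, integral_add IntG1 IntG2, integral_const_mul] at h5
    linarith
  have hRev : Rev c u = (∫ x in box c, x.1 * pd1 u x) + (∫ x in box c, x.2 * pd2 u x)
      - ∫ x in box c, u x := by
    have hs1 : IntegrableOn (fun x : ℝ × ℝ => x.1 * pd1 u x + x.2 * pd2 u x) (box c) :=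
      IntF1.add IntF2
    rw [Rev, integral_sub hs1 Intu, integral_add IntF1 IntF2]
  have hR1 : (∫ x in box c, (pd1 z₁ x * u x + z₁ x - u x))
      = (∫ x in box c, pd1 z₁ x * u x) + (∫ x in box c, z₁ x) - ∫ x in box c, u x := by
    have hs1 : IntegrableOn (fun x : ℝ × ℝ => pd1 z₁ x * u x + z₁ x) (box c) :=
      IntG1.add Intz1
    rw [integral_sub hs1 Intu, integral_add IntG1 Intz1]
  have hR2 : (∫ x in box c, (pd2 z₂ x * u x + z₂ x - u x))
      = (∫ x in box c, pd2 z₂ x * u x) + (∫ x in box c, z₂ x) - ∫ x in box c, u x := by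
    have hs1 : IntegrableOn (fun x : ℝ × ℝ => pd2 z₂ x * u x + z₂ x) (box c) :=
      IntG2.add Intz2
    rw [integral_sub hs1 Intu, integral_add IntG2 Intz2]
  have hZ : (∫ x in box c, (z₁ x + z₂ x)) = (∫ x in box c, z₁ x) + ∫ x in box c, z₂ x :=
    integral_add Intz1 Intz2
  rw [hRev, hZ]
  rw [hR1] at S1
  rw [hR2] at S2
  linarith
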